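/- arXiv:2603.13854 — 10 statements merged into one kernel-verified Lean document; each statement's English description precedes it below -/
import Mathlib

section
/- For all finsets S and V of ι, if S ∩ V ≠ ∅ then m_S * F_V = m_S in the ring R (collapse lemma: a monomial absorbs a power-set sum whose variable set meets the monomial's support). -/
variable {ι : Type*} [DecidableEq ι]

/-- Monomial semantics: `m S` evaluates an assignment `a` to `∏ i ∈ S, a i`. -/
def m (S : Finset ι) : (ι → ZMod 2) → ZMod 2 :=
  fun a => ∏ i ∈ S, a i

/-- Power-set sum semantics: `F U` evaluates `a` to the sum over nonempty subsets `A ⊆ U`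
of `∏ i ∈ A, a i`. -/
def F (U : Finset ι) : (ι → ZMod 2) → ZMod 2 :=
  fun a => ∑ A ∈ U.powerset.erase ∅, ∏ i ∈ A, a i

theorem stmt2 (S V : Finset ι) (h : S ∩ V ≠ ∅) :
    m S * F V = m S := by
  obtain ⟨j, hj⟩ := Finset.nonempty_iff_ne_empty.mpr h
  rw [Finset.mem_inter] at hj
  funext a
  simp only [Pi.mul_apply, m, F]
  by_cases hja : a j = 0
  · rw [Finset.prod_eq_zero hj.1 hja]; ring
  · have hja1 : a j = 1 := by
      have : ∀ x : ZMod 2, x ≠ 0 → x = 1 := by decide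
      exact this _ hja
    have hkey : ∑ A ∈ V.powerset, ∏ i ∈ A, a i = 0 := by
      have := Finset.prod_add a (fun _ => (1 : ZMod 2)) V
      simp only [Finset.prod_const_one, mul_one] at this
      rw [← this]
      exact Finset.prod_eq_zero hj.2 (by rw [hja1]; decide)
    have hsplit := Finset.add_sum_erase V.powerset (fun A => ∏ i ∈ A, a i)
      (Finset.empty_mem_powerset V)
    rw [hkey] at hsplit
    simp only [Finset.prod_empty] at hsplit
    have hF : ∑ A ∈ V.powerset.erase ∅, ∏ i ∈ A, a i = 1 := by
      have : (1 : ZMod 2) + ∑ A ∈ V.powerset.erase ∅, ∏ i ∈ A, a i = 0 := hsplit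
      have h2 : (2:ZMod 2) = 0 := by decide
      linear_combination this - h2
    rw [hF, mul_one]
end

section
/- For all finsets S, U, T, V of ι, the product of the evaluations of two power terms satisfies (m_S * F_U) * (m_T * F_V) = m_{S ∪ T} * F_{U ∪ V} + m_{S ∪ T} * F_U + m_{S ∪ T} * F_V in R (semantic core of the Multiplication Rewriting Principle: the product of any two power term evaluations equals the evaluation of a power term polynomial with at most three atomic terms). -/
variable {ι : Type*} [DecidableEq ι]

lemma prod_idem (A : Finset ι) (f : ι → ZMod 2) :
    (∏ i ∈ A, f i) * ∏ i ∈ A, f i = ∏ i ∈ A, f i := by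
  have hx : ∀ x : ZMod 2, x * x = x := by decide
  rw [← Finset.prod_mul_distrib]
  exact Finset.prod_congr rfl fun i _ => hx (f i)

lemma prod_union_idem (A B : Finset ι) (f : ι → ZMod 2) :
    (∏ i ∈ A, f i) * ∏ i ∈ B, f i = ∏ i ∈ A ∪ B, f i := by
  rw [← Finset.prod_union_inter]
  have h : A ∩ B ⊆ A ∪ B := (Finset.inter_subset_left).trans Finset.subset_union_left
  rw [← Finset.prod_sdiff h]
  rw [mul_assoc, prod_idem]

lemma F_eq (U : Finset ι) (a : ι → ZMod 2) :
    F U a = (∏ i ∈ U, (a i + 1)) + 1 := by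
  have h0 : (∅ : Finset ι) ∈ U.powerset := Finset.empty_mem_powerset U
  have hs := Finset.sum_erase_add U.powerset (fun A => ∏ i ∈ A, a i) h0
  have hp : ∏ i ∈ U, (a i + 1) = ∑ A ∈ U.powerset, ∏ i ∈ A, a i := by
    rw [Finset.prod_add]
    simp
  have hF : F U a + 1 = ∏ i ∈ U, (a i + 1) := by
    rw [hp, ← hs]
    simp [F]
  have h2 : (1 : ZMod 2) + 1 = 0 := by decide
  rw [← hF, add_assoc, h2, add_zero]

theorem stmt4 (S U T V : Finset ι) :
    (m S * F U) * (m T * F V)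
      = m (S ∪ T) * F (U ∪ V) + m (S ∪ T) * F U + m (S ∪ T) * F V := by
  funext a
  simp only [Pi.mul_apply, Pi.add_apply, F_eq, m]
  set p := ∏ i ∈ U, (a i + 1) with hp
  set q := ∏ i ∈ V, (a i + 1) with hq
  have hpq : p * q = ∏ i ∈ U ∪ V, (a i + 1) := prod_union_idem U V _
  have hst : (∏ i ∈ S, a i) * ∏ i ∈ T, a i = ∏ i ∈ S ∪ T, a i := prod_union_idem S T _
  have h2 : (2 : ZMod 2) = 0 := by decide
  linear_combination (p * q + p + q + 1) * hst + (∏ i ∈ S ∪ T, a i) * hpq -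
    (∏ i ∈ S ∪ T, a i) * h2
end

section
/- For all finsets S, U, T, V of ι, if S ∩ V ≠ ∅ then (m_S * F_U) * (m_T * F_V) = m_{S ∪ T} * F_U in R (multiplication rules 10 and 13 of the Multiplication Rewriting Principle). -/
variable {ι : Type*} [DecidableEq ι]

lemma zmod2_cases (x : ZMod 2) : x = 0 ∨ x = 1 := by revert x; decide

lemma F_one (V : Finset ι) (a : ι → ZMod 2) {j : ι} (hj : j ∈ V) (ha : a j = 1) :
    F V a = 1 := by
  rw [F_eq]
  have : (∏ i ∈ V, (a i + 1)) = 0 :=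
    Finset.prod_eq_zero hj (by rw [ha]; decide)
  rw [this, zero_add]

lemma prod_one (S : Finset ι) (a : ι → ZMod 2) (h : ∏ i ∈ S, a i = 1) :
    ∀ i ∈ S, a i = 1 := by
  intro i hi
  rcases zmod2_cases (a i) with h0 | h1
  · rw [Finset.prod_eq_zero hi h0] at h; exact absurd h (by decide)
  · exact h1

theorem stmt5 (S U T V : Finset ι) (h : S ∩ V ≠ ∅) :
    (m S * F U) * (m T * F V) = m (S ∪ T) * F U := by
  funext a
  obtain ⟨j, hj⟩ := Finset.nonempty_iff_ne_empty.mpr h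
  have hjS : j ∈ S := (Finset.mem_inter.mp hj).1
  have hjV : j ∈ V := (Finset.mem_inter.mp hj).2
  show (m S a * F U a) * (m T a * F V a) = m (S ∪ T) a * F U a
  rcases zmod2_cases (F U a) with hF | hF
  · rw [hF]; ring
  rw [hF, mul_one, mul_one]
  rcases zmod2_cases (m S a) with hS | hS
  · -- m S a = 0 forces m (S ∪ T) a = 0
    have hST : m (S ∪ T) a = m S a * ∏ i ∈ T \ S, a i := by
      unfold m
      rw [← Finset.prod_union (Finset.disjoint_sdiff), Finset.union_sdiff_self_eq_union]
    rw [hST, hS]; ring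
  · have hall : ∀ i ∈ S, a i = 1 := prod_one S a hS
    have hFV : F V a = 1 := F_one V a hjV (hall j hjS)
    rw [hS, hFV, one_mul, mul_one]
    have hST : m (S ∪ T) a = m S a * ∏ i ∈ T \ S, a i := by
      unfold m
      rw [← Finset.prod_union (Finset.disjoint_sdiff), Finset.union_sdiff_self_eq_union]
    have hT : m T a = (∏ i ∈ T ∩ S, a i) * ∏ i ∈ T \ S, a i :=
      (Finset.prod_inter_mul_prod_diff T S (fun i => a i)).symm
    have hTS : (∏ i ∈ T ∩ S, a i) = 1 :=
      Finset.prod_eq_one fun i hi => hall i (Finset.mem_inter.mp hi).2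
    rw [hST, hS, hT, hTS]
end

section
/- For all finsets S, U, T, V of ι, if S ∩ V ≠ ∅ and T ∩ U ≠ ∅ then (m_S * F_U) * (m_T * F_V) = m_{S ∪ T} in R (multiplication rules 12 and 15 of the Multiplication Rewriting Principle). -/
variable {ι : Type*} [DecidableEq ι]

lemma F_eq_one (V : Finset ι) (a : ι → ZMod 2) (j : ι) (hj : j ∈ V) (ha : a j = 1) :
    F V a = 1 := by
  have hsum : ∑ A ∈ V.powerset, ∏ i ∈ A, a i = ∏ i ∈ V, (a i + 1) := by
    rw [Finset.prod_add]
    apply Finset.sum_congr rfl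
    intro t _
    simp
  have hzero : ∏ i ∈ V, (a i + 1) = 0 :=
    Finset.prod_eq_zero hj (by rw [ha]; decide)
  have h0 : (∅ : Finset ι) ∈ V.powerset := Finset.empty_mem_powerset V
  have := Finset.add_sum_erase V.powerset (fun A => ∏ i ∈ A, a i) h0
  rw [hsum, hzero] at this
  have key : (1 : ZMod 2) + F V a = 0 := by
    simpa [F] using this
  revert key; generalize F V a = x; revert x; decide

theorem stmt6 (S U T V : Finset ι) (h1 : S ∩ V ≠ ∅) (h2 : T ∩ U ≠ ∅) :
    (m S * F U) * (m T * F V) = m (S ∪ T) := by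
  funext a
  simp only [Pi.mul_apply]
  by_cases hS : ∀ i ∈ S, a i = 1
  · by_cases hT : ∀ i ∈ T, a i = 1
    · obtain ⟨j, hj⟩ := Finset.nonempty_iff_ne_empty.2 h1
      obtain ⟨k, hk⟩ := Finset.nonempty_iff_ne_empty.2 h2
      rw [Finset.mem_inter] at hj hk
      have hFU : F U a = 1 := F_eq_one U a k hk.2 (hT k hk.1)
      have hFV : F V a = 1 := F_eq_one V a j hj.2 (hS j hj.1)
      have hmS : m S a = 1 := Finset.prod_eq_one hS
      have hmT : m T a = 1 := Finset.prod_eq_one hT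
      have hmST : m (S ∪ T) a = 1 := Finset.prod_eq_one (by
        intro i hi
        rcases Finset.mem_union.1 hi with h | h
        · exact hS i h
        · exact hT i h)
      rw [hFU, hFV, hmS, hmT, hmST]; ring
    · push_neg at hT
      obtain ⟨i, hi, hi1⟩ := hT
      have hi0 : a i = 0 := by
        revert hi1; generalize a i = x; revert x; decide
      have hmT : m T a = 0 := Finset.prod_eq_zero hi hi0
      have hmST : m (S ∪ T) a = 0 :=
        Finset.prod_eq_zero (Finset.mem_union_right S hi) hi0
      rw [hmT, hmST]; ring
  · push_neg at hS
    obtain ⟨i, hi, hi1⟩ := hS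
    have hi0 : a i = 0 := by
      revert hi1; generalize a i = x; revert x; decide
    have hmS : m S a = 0 := Finset.prod_eq_zero hi hi0
    have hmST : m (S ∪ T) a = 0 :=
      Finset.prod_eq_zero (Finset.mem_union_left T hi) hi0
    rw [hmS, hmST]; ring
end

section
/- For all finsets U and V of ι with U ⊆ V, one has F_U * F_V = F_U in R (multiplication rule 20 of the Multiplication Rewriting Principle: the inclusion case collapses the product to the smaller power-set sum). -/
variable {ι : Type*} [DecidableEq ι]

lemma idem (x : ZMod 2) : x * x = x := by revert x; decide

theorem stmt7 (U V : Finset ι) (h : U ⊆ V) :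
    F U * F V = F U := by
  funext a
  have hV : (∏ i ∈ V, (a i + 1)) = (∏ i ∈ U, (a i + 1)) * ∏ i ∈ V \ U, (a i + 1) := by
    rw [mul_comm, Finset.prod_sdiff h]
  show F U a * F V a = F U a
  rw [F_eq, F_eq, hV]
  set p := ∏ i ∈ U, (a i + 1)
  set q := ∏ i ∈ V \ U, (a i + 1)
  have h2 : (2 : ZMod 2) = 0 := by decide
  have hpp : p * p = p := idem p
  linear_combination q * hpp + p * q * h2
end

section
/- Let S be a finset of ι and let t, v ∈ ι be distinct elements with t ∉ S and v ∉ S. Then m_S * F_{{t,v}} = m_{S ∪ {t}} + m_{S ∪ {t,v}} + m_{S ∪ {v}} in R (Case 1 of the shortening/expanding rule for power term polynomials). -/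
variable {ι : Type*} [DecidableEq ι]

theorem stmt8 (S : Finset ι) (t v : ι) (htv : t ≠ v) (htS : t ∉ S) (hvS : v ∉ S) :
    m S * F {t, v} = m (S ∪ {t}) + m (S ∪ {t, v}) + m (S ∪ {v}) := by
  have hpow : ({t, v} : Finset ι).powerset.erase ∅ = {{t}, {v}, {t, v}} := by
    rw [show ({t, v} : Finset ι) = insert t {v} from rfl, Finset.powerset_insert]
    ext A
    simp only [Finset.mem_erase, Finset.mem_union, Finset.mem_insert,
      Finset.mem_singleton, Finset.mem_image, Finset.mem_powerset,
      Finset.subset_singleton_iff]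
    constructor
    · rintro ⟨hne, (rfl | rfl) | ⟨B, (rfl | rfl), rfl⟩⟩ <;> simp_all
    · rintro (rfl | rfl | rfl)
      · exact ⟨Finset.singleton_ne_empty t, Or.inr ⟨∅, Or.inl rfl, rfl⟩⟩
      · exact ⟨Finset.singleton_ne_empty v, Or.inl (Or.inr rfl)⟩
      · exact ⟨Finset.insert_ne_empty t {v}, Or.inr ⟨{v}, Or.inr rfl, rfl⟩⟩
  funext a
  simp only [Pi.mul_apply, Pi.add_apply, m, F, hpow]
  rw [Finset.sum_insert (by simp [Finset.ext_iff, htv, htv.symm]),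
      Finset.sum_insert (by simp [Finset.ext_iff, htv, htv.symm]),
      Finset.sum_singleton]
  rw [Finset.union_comm S {t}, Finset.union_comm S {t,v}, Finset.union_comm S {v}]
  rw [Finset.prod_union (by simp [htS]), Finset.prod_union (by simp [htS, hvS]),
      Finset.prod_union (by simp [hvS])]
  ring
end

section
/- Let S, T, V be pairwise disjoint finsets of ι. Then m_S * F_{T ∪ V} = (∑ over nonempty subsets Ṽ ⊆ V of m_{S ∪ Ṽ} * F_T) + m_S * F_T + m_S * F_V in R (Case 3 of the shortening/expanding rule for power term polynomials). -/
variable {ι : Type*} [DecidableEq ι]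

lemma F_add_one (U : Finset ι) (a : ι → ZMod 2) :
    F U a + 1 = ∏ i ∈ U, (a i + 1) := by
  rw [Finset.prod_add]
  have h := Finset.sum_erase_add U.powerset (fun A => ∏ i ∈ A, a i)
    (Finset.empty_mem_powerset U)
  simp only [Finset.prod_empty] at h
  rw [F]
  rw [h]
  apply Finset.sum_congr rfl
  intro A hA
  simp

theorem stmt10 (S T V : Finset ι)
    (hST : Disjoint S T) (hSV : Disjoint S V) (hTV : Disjoint T V) :
    m S * F (T ∪ V)
      = (∑ Vt ∈ V.powerset.erase ∅, m (S ∪ Vt) * F T) + m S * F T + m S * F V := by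
  funext a
  simp only [Pi.mul_apply, Pi.add_apply, Finset.sum_apply]
  have h2 : (2 : ZMod 2) = 0 := by decide
  have key : ∀ U : Finset ι, F U a = ∏ i ∈ U, (a i + 1) + 1 := by
    intro U
    linear_combination F_add_one U a - h2
  have hm : ∀ Vt ∈ V.powerset.erase ∅, m (S ∪ Vt) a * F T a
      = m S a * (∏ i ∈ Vt, a i) * F T a := by
    intro Vt hVt
    have hVtV : Vt ⊆ V := Finset.mem_powerset.mp (Finset.mem_of_mem_erase hVt)
    rw [m, Finset.prod_union (hSV.mono_right hVtV)]
    rfl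
  rw [Finset.sum_congr rfl hm]
  have hsum : ∑ Vt ∈ V.powerset.erase ∅, m S a * (∏ i ∈ Vt, a i) * F T a
      = m S a * F V a * F T a := calc
    ∑ Vt ∈ V.powerset.erase ∅, m S a * (∏ i ∈ Vt, a i) * F T a
        = ∑ Vt ∈ V.powerset.erase ∅, (∏ i ∈ Vt, a i) * (m S a * F T a) :=
          Finset.sum_congr rfl (fun _ _ => by ring)
    _ = (∑ Vt ∈ V.powerset.erase ∅, ∏ i ∈ Vt, a i) * (m S a * F T a) := by
          rw [Finset.sum_mul]
    _ = m S a * F V a * F T a := by simp only [F]; ring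
  rw [hsum, key (T ∪ V), key T, key V, Finset.prod_union hTV]
  linear_combination (-(m S a) * (1 + ∏ i ∈ T, (a i + 1) + ∏ i ∈ V, (a i + 1))) * h2
end

section
/- Let K be a nonempty finset of ι. Then for every assignment a : ι → ZMod 2, F_K(a) = 1 if and only if there exists i ∈ K with a i = 1. (Case 1 of the canonicity of disjunctive formulae: F_K is the algebraic normal form of the clause that is the disjunction of the positive literals x_i for i ∈ K.) -/
variable {ι : Type*} [DecidableEq ι]

theorem stmt11 (K : Finset ι) (hK : K.Nonempty) (a : ι → ZMod 2) :
    F K a = 1 ↔ ∃ i ∈ K, a i = 1 := by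
  have key : F K a = (∏ i ∈ K, (a i + 1)) + 1 := by
    have h1 : ∏ i ∈ K, (a i + 1) = ∑ A ∈ K.powerset, ∏ i ∈ A, a i := by
      rw [Finset.prod_add]
      exact Finset.sum_congr rfl fun A hA => by simp
    have h2 : (∅ : Finset ι) ∈ K.powerset := Finset.empty_mem_powerset K
    rw [h1, ← Finset.add_sum_erase _ _ h2]
    show F K a = 1 + F K a + 1
    have h11 : (1 : ZMod 2) + 1 = 0 := by decide
    rw [add_comm 1 (F K a), add_assoc, h11, add_zero]
  constructor
  · intro h
    by_contra hc
    push_neg at hc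
    have hz : ∀ x : ZMod 2, x ≠ 1 → x = 0 := by decide
    have hall : ∀ i ∈ K, a i = 0 := fun i hi => hz _ (hc i hi)
    rw [key, Finset.prod_congr rfl (fun i hi => by rw [hall i hi])] at h
    simp at h
  · rintro ⟨i, hi, hai⟩
    rw [key, Finset.prod_eq_zero hi (by rw [hai]; decide)]
    ring
end

section
/- Let i, j, k ∈ ι be pairwise distinct. Then F_{{i,j,k}} + m_{{i,j,k}} + m_{{j,k}} = F_{{i,j}} + m_{{k}} + m_{{i,k}} in R (the equality of the two distinct minimal power term polynomial representations of x_i + x_j + x_k + x_i x_j + x_i x_k used in the proof that minimal representations are not canonical). -/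
variable {ι : Type*} [DecidableEq ι]

lemma F_insert (x : ι) (U : Finset ι) (hx : x ∉ U) (a : ι → ZMod 2) :
    F (insert x U) a = F U a + a x * (F U a + 1) := by
  have h1 : F (insert x U) a + 1 = ∑ A ∈ (insert x U).powerset, ∏ i ∈ A, a i := by
    rw [F, Finset.sum_erase_eq_sub (by simp)]
    simp
  have h2 : F U a + 1 = ∑ A ∈ U.powerset, ∏ i ∈ A, a i := by
    rw [F, Finset.sum_erase_eq_sub (by simp)]
    simp
  have h3 : ∑ A ∈ (insert x U).powerset, ∏ i ∈ A, a i
      = (∑ A ∈ U.powerset, ∏ i ∈ A, a i) + a x * ∑ A ∈ U.powerset, ∏ i ∈ A, a i := by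
    rw [Finset.sum_powerset_insert hx, Finset.mul_sum]
    congr 1
    refine Finset.sum_congr rfl fun A hA => ?_
    rw [Finset.prod_insert fun hxA => hx (Finset.mem_powerset.mp hA hxA)]
  have := h3
  rw [← h1, ← h2] at this
  linear_combination this

theorem stmt15 (i j k : ι) (hij : i ≠ j) (hik : i ≠ k) (hjk : j ≠ k) :
    F {i, j, k} + m {i, j, k} + m {j, k} = F {i, j} + m {k} + m {i, k} := by
  funext a
  have hF0 : F (∅ : Finset ι) a = 0 := by simp [F]
  have h1 : F {i, j, k} a = _ := F_insert i {j, k} (by simp [hij, hik]) a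
  have h2 : F ({j, k} : Finset ι) a = _ := F_insert j {k} (by simp [hjk]) a
  have h3 : F ({k} : Finset ι) a = _ := F_insert k ∅ (by simp) a
  have h4 : F ({i, j} : Finset ι) a = _ := F_insert i {j} (by simp [hij]) a
  have h5 : F ({j} : Finset ι) a = _ := F_insert j ∅ (by simp) a
  simp only [Pi.add_apply, h1, h2, h3, h4, h5, hF0, m,
    Finset.prod_insert, Finset.mem_insert, Finset.mem_singleton, hij, hik, hjk,
    Finset.prod_singleton, not_or, and_self, not_false_iff]
  generalize a i = x
  generalize a j = y
  generalize a k = z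
  revert x y z
  decide
end

section
/- Let S and T be finsets of ι and let a, b, c ∈ ι be pairwise distinct elements none of which lies in S ∪ T. Then (m_S * F_{{a,c}}) * (m_T * F_{{b,c}}) = m_{S ∪ T ∪ {a,b}} + m_{S ∪ T ∪ {a,b,c}} + m_{S ∪ T ∪ {c}} in R (the semantic identity underlying multiplication rule 19 of the Multiplication Rewriting Principle, where |U ∩ V| = |U \ V| = |V \ U| = 1). -/
variable {ι : Type*} [DecidableEq ι]

lemma m_mul (S T : Finset ι) (x : ι → ZMod 2) : m S x * m T x = m (S ∪ T) x := by
  unfold m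
  rw [← Finset.prod_union_inter,
    ← Finset.prod_sdiff (Finset.inter_subset_union (s := S) (t := T)),
    mul_assoc, ← Finset.prod_mul_distrib]
  congr 1
  exact Finset.prod_congr rfl (fun i _ => by generalize x i = y; revert y; decide)

lemma F_pair (a c : ι) (h : a ≠ c) (x : ι → ZMod 2) :
    F {a, c} x = x a + x c + x a * x c := by
  have hset : ({a,c} : Finset ι).powerset.erase ∅ = {{a},{c},{a,c}} := by
    have hps : ({c} : Finset ι).powerset = {∅, {c}} := by
      rw [show ({c}:Finset ι) = insert c ∅ from rfl, Finset.powerset_insert,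
        Finset.powerset_empty, Finset.image_singleton]
      rfl
    rw [show ({a,c}:Finset ι) = insert a {c} from rfl, Finset.powerset_insert, hps]
    ext A
    simp only [Finset.mem_erase, Finset.mem_union, Finset.mem_image, Finset.mem_insert,
      Finset.mem_singleton]
    constructor
    · rintro ⟨hA, (h1|h1) | ⟨B, (hB|hB), rfl⟩⟩ <;> simp_all
    · rintro (rfl|rfl|rfl)
      · exact ⟨Finset.singleton_ne_empty a, Or.inr ⟨∅, Or.inl rfl, rfl⟩⟩
      · exact ⟨Finset.singleton_ne_empty c, Or.inl (Or.inr rfl)⟩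
      · exact ⟨Finset.insert_ne_empty a {c}, Or.inr ⟨{c}, Or.inr rfl, rfl⟩⟩
  rw [F, hset]
  have h1 : ({a} : Finset ι) ∉ ({{c},{a,c}} : Finset (Finset ι)) := by
    simp only [Finset.mem_insert, Finset.mem_singleton]
    push_neg
    constructor
    · intro hh
      have : a ∈ ({c} : Finset ι) := hh ▸ by simp
      exact h (by simpa using this)
    · intro hh
      have : c ∈ ({a} : Finset ι) := hh ▸ by simp
      exact h.symm (by simpa using this)
  have h2 : ({c} : Finset ι) ∉ ({{a,c}} : Finset (Finset ι)) := by
    simp only [Finset.mem_singleton]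
    intro hh
    have : a ∈ ({c} : Finset ι) := hh ▸ by simp
    exact h (by simpa using this)
  rw [Finset.sum_insert h1, Finset.sum_insert h2, Finset.sum_singleton,
    Finset.prod_singleton, Finset.prod_singleton, Finset.prod_pair h, add_assoc]

theorem stmt19 (S T : Finset ι) (a b c : ι)
    (hab : a ≠ b) (hac : a ≠ c) (hbc : b ≠ c)
    (haST : a ∉ S ∪ T) (hbST : b ∉ S ∪ T) (hcST : c ∉ S ∪ T) :
    (m S * F {a, c}) * (m T * F {b, c})
      = m (S ∪ T ∪ {a, b}) + m (S ∪ T ∪ {a, b, c}) + m (S ∪ T ∪ {c}) := by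
  funext x
  simp only [Pi.mul_apply, Pi.add_apply]
  have key : ∀ u v p q r : ZMod 2,
      (u * (p + r + p*r)) * (v * (q + r + q*r))
        = u*v*(p*q) + u*v*(p*q*r) + u*v*r := by decide
  have hab' : m ({a,b} : Finset ι) x = x a * x b := by simp [m, Finset.prod_pair hab]
  have habc : m ({a,b,c} : Finset ι) x = x a * x b * x c := by
    rw [m, show ({a,b,c}:Finset ι) = insert a {b,c} from rfl,
      Finset.prod_insert (by simp [hab, hac]), Finset.prod_pair hbc, mul_assoc]
  have hc' : m ({c} : Finset ι) x = x c := by simp [m]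
  have e1 : m (S ∪ T ∪ {a,b}) x = m S x * m T x * (x a * x b) := by
    rw [← m_mul, ← m_mul, hab']
  have e2 : m (S ∪ T ∪ {a,b,c}) x = m S x * m T x * (x a * x b * x c) := by
    rw [← m_mul, ← m_mul, habc]
  have e3 : m (S ∪ T ∪ {c}) x = m S x * m T x * x c := by
    rw [← m_mul, ← m_mul, hc']
  rw [F_pair a c hac x, F_pair b c hbc x, e1, e2, e3]
  exact key _ _ _ _ _
end
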